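/- Let X ⊆ ℕ and a ≥ b ≥ 1 be integers with d̄(X) > a/(a+1). Then the gaps of the set aX - bX are bounded by a: for every n ∈ aX - bX there exists n' ∈ aX - bX with 1 ≤ n' - n ≤ a. The same holds for the set bX - aX. -/

import Mathlib

open scoped Classical

/-- Upper density of a set of natural numbers. -/
noncomputable def upperDensity (A : Set ℕ) : ℝ :=
  Filter.atTop.limsup fun n => (((Finset.Icc 1 n).filter fun m => m ∈ A).card : ℝ) / n

private lemma core (X : Set ℕ) (a : ℤ) (ha : 1 ≤ a)
    (hd : (a : ℝ) / (a + 1) < upperDensity X)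
    (ψ : ℕ → ℕ)
    (hgrow : ∀ j : ℕ, 1 ≤ j → (ψ j : ℤ) ≤ j + 1)
    (hfib : ∀ j j' : ℕ, 1 ≤ j → 1 ≤ j' → ψ j = ψ j' → (j : ℤ) + a ≤ j' → False)
    (u v : ℕ) :
    ∃ j : ℕ, 1 ≤ j ∧ (v + j) ∈ X ∧ (u + ψ j) ∈ X := by
  by_contra hcon
  push_neg at hcon
  -- density consequences
  have ha0 : (0:ℝ) < (a:ℝ) := by exact_mod_cast ha
  have ha1 : (0:ℝ) < (a:ℝ) + 1 := by linarith
  set f : ℕ → ℝ := fun n => (((Finset.Icc 1 n).filter fun m => m ∈ X).card : ℝ) / n with hf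
  set c' : ℝ := ((a:ℝ)/(a+1) + upperDensity X)/2 with hc'
  have hc1 : (a:ℝ)/(a+1) < c' := by
    have h := hd
    rw [hc']; linarith
  have hc2 : c' < Filter.limsup f Filter.atTop := by
    have h := hd
    rw [hc']
    show _ < upperDensity X
    linarith
  have hδpos : 0 < c' * ((a:ℝ)+1) - a := by
    have := (div_lt_iff₀ ha1).mp hc1
    linarith
  set δ : ℝ := c' * ((a:ℝ)+1) - a with hδ
  set C : ℝ := (a:ℝ) + u + v + 2 with hC
  have hCpos : 0 < C := by rw [hC]; positivity
  have hbdd : Filter.IsBoundedUnder (· ≥ ·) Filter.atTop f := by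
    refine ⟨0, Filter.eventually_map.2 (Filter.Eventually.of_forall fun n => ?_)⟩
    show (0:ℝ) ≤ f n
    rw [hf]; positivity
  have hfreq : ∃ᶠ n in Filter.atTop, c' < f n :=
    Filter.frequently_lt_of_lt_limsup hbdd.isCoboundedUnder_le hc2
  obtain ⟨n, hnN, hfn⟩ := Filter.frequently_atTop.mp hfreq (max (u + v + 3) (Nat.ceil (C/δ) + 1))
  have hn1 : u + v + 3 ≤ n := le_trans (le_max_left _ _) hnN
  have hn2 : Nat.ceil (C/δ) + 1 ≤ n := le_trans (le_max_right _ _) hnN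
  have hnpos : 0 < n := by omega
  set Xn := (Finset.Icc 1 n).filter (fun m => m ∈ X) with hXn
  set Hn := (Finset.Icc 1 n).filter (fun m => m ∉ X) with hHn
  have hXcn : c' * n < (Xn.card : ℝ) := by
    have h : c' < (Xn.card : ℝ) / n := hfn
    rwa [lt_div_iff₀ (by exact_mod_cast hnpos)] at h
  set M := n - (u + v + 2) with hM
  have hMn : u + v + 2 + M = n := by omega
  have hM1 : 1 ≤ M := by omega
  set S := (Finset.Icc 1 M).filter (fun j => v + j ∈ X) with hS
  -- lower bound on S.card
  have hlow : Xn.card ≤ S.card + (u + v + 2) := by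
    have hsub : Xn ⊆ (S.image (fun j => v + j)) ∪ (Finset.Icc 1 v) ∪ (Finset.Icc (v + M + 1) n) := by
      intro m hm
      rw [hXn, Finset.mem_filter, Finset.mem_Icc] at hm
      obtain ⟨⟨h1, h2⟩, hmX⟩ := hm
      rcases le_or_gt m v with h3 | h3
      · exact Finset.mem_union_left _ (Finset.mem_union_right _ (Finset.mem_Icc.mpr ⟨h1, h3⟩))
      rcases le_or_gt (v + M + 1) m with h4 | h4
      · exact Finset.mem_union_right _ (Finset.mem_Icc.mpr ⟨h4, h2⟩)
      · refine Finset.mem_union_left _ (Finset.mem_union_left _ ?_)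
        refine Finset.mem_image.mpr ⟨m - v, ?_, by omega⟩
        rw [hS, Finset.mem_filter, Finset.mem_Icc]
        have he : v + (m - v) = m := by omega
        exact ⟨⟨by omega, by omega⟩, by rw [he]; exact hmX⟩
    have hcard1 : Xn.card ≤
        ((S.image (fun j => v + j)) ∪ (Finset.Icc 1 v) ∪ (Finset.Icc (v + M + 1) n)).card :=
      Finset.card_le_card hsub
    have hcard2 : ((S.image (fun j => v + j)) ∪ (Finset.Icc 1 v) ∪ (Finset.Icc (v + M + 1) n)).card
        ≤ (S.image (fun j => v + j)).card + (Finset.Icc 1 v).card + (Finset.Icc (v + M + 1) n).card :=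
      le_trans (Finset.card_union_le _ _) (Nat.add_le_add_right (Finset.card_union_le _ _) _)
    have hcard3 : (S.image (fun j => v + j)).card ≤ S.card := Finset.card_image_le
    have e1 : (Finset.Icc 1 v).card = v := by rw [Nat.card_Icc]; omega
    have e2 : (Finset.Icc (v + M + 1) n).card = u + 2 := by rw [Nat.card_Icc]; omega
    omega
  -- upper bound on S.card
  have hSmem : ∀ j ∈ S, 1 ≤ j ∧ j ≤ M ∧ v + j ∈ X := by
    intro j hj
    rw [hS, Finset.mem_filter, Finset.mem_Icc] at hj
    exact ⟨hj.1.1, hj.1.2, hj.2⟩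
  have hSfail : ∀ j ∈ S, u + ψ j ∉ X := by
    intro j hj
    obtain ⟨h1, _, h3⟩ := hSmem j hj
    exact hcon j h1 h3
  have hA1 : 1 ≤ a.toNat := by omega
  have hAa : (a.toNat : ℤ) = a := Int.toNat_of_nonneg (by omega)
  have hfibS : ∀ k ∈ S.image ψ, (S.filter fun j => ψ j = k).card ≤ a.toNat := by
    intro k hk
    set F := S.filter (fun j => ψ j = k) with hF
    rcases F.eq_empty_or_nonempty with hFe | hFne
    · rw [hFe]; simp
    · have htm := F.min'_mem hFne
      set t := F.min' hFne with ht
      have hFsub : F ⊆ Finset.Icc t (t + (a.toNat - 1)) := by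
        intro j hj
        refine Finset.mem_Icc.mpr ⟨F.min'_le j hj, ?_⟩
        by_contra hgt
        push_neg at hgt
        rw [hF, Finset.mem_filter] at hj htm
        obtain ⟨h1t, _, _⟩ := hSmem t htm.1
        obtain ⟨h1j, _, _⟩ := hSmem j hj.1
        refine hfib t j h1t h1j (htm.2.trans hj.2.symm) ?_
        have h5 : t + a.toNat ≤ j := by omega
        have h6 : (t:ℤ) + (a.toNat:ℤ) ≤ (j:ℤ) := by exact_mod_cast h5
        omega
      calc F.card ≤ (Finset.Icc t (t + (a.toNat - 1))).card := Finset.card_le_card hFsub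
        _ ≤ a.toNat := by rw [Nat.card_Icc]; omega
  have hup1 : S.card ≤ a.toNat * (S.image ψ).card :=
    Finset.card_le_mul_card_image (f := ψ) S a.toNat hfibS
  have hup2 : ((S.image ψ).erase 0).card ≤ Hn.card := by
    apply Finset.card_le_card_of_injOn (fun k => u + k)
    · intro k hk
      obtain ⟨hk0, hkim⟩ := Finset.mem_erase.mp hk
      obtain ⟨j, hjS, hjk⟩ := Finset.mem_image.mp hkim
      obtain ⟨h1j, hjM, _⟩ := hSmem j hjS
      have hnotX : u + k ∉ X := by rw [← hjk]; exact hSfail j hjS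
      have hkM : k ≤ M + 1 := by
        have h := hgrow j h1j
        rw [hjk] at h
        have h7 : (k:ℤ) ≤ (M:ℤ) + 1 := by
          have h8 : (j:ℤ) ≤ (M:ℤ) := by exact_mod_cast hjM
          omega
        exact_mod_cast h7
      rw [hHn, Finset.mem_coe, Finset.mem_filter, Finset.mem_Icc]; beta_reduce
      exact ⟨⟨by omega, by omega⟩, hnotX⟩
    · intro k1 _ k2 _ h
      have h' : u + k1 = u + k2 := h
      omega
  have hup3 : (S.image ψ).card ≤ Hn.card + 1 := by
    by_cases h0 : 0 ∈ S.image ψ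
    · have := Finset.card_erase_of_mem h0
      omega
    · rw [Finset.erase_eq_of_notMem h0] at hup2
      omega
  have hpart : Xn.card + Hn.card = n := by
    have h := Finset.card_filter_add_card_filter_not (s := Finset.Icc 1 n)
      (p := fun m => m ∈ X)
    rw [Nat.card_Icc] at h
    rw [hXn, hHn]
    omega
  -- final arithmetic
  have h1 : (Xn.card : ℝ) ≤ (S.card : ℝ) + ((u:ℝ) + v + 2) := by exact_mod_cast hlow
  have hAr : (a.toNat : ℝ) = (a:ℝ) := by exact_mod_cast hAa
  have h2 : (S.card : ℝ) ≤ (a:ℝ) * ((Hn.card : ℝ) + 1) := by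
    have hh : (S.card : ℝ) ≤ (a.toNat : ℝ) * ((S.image ψ).card : ℝ) := by exact_mod_cast hup1
    have hh2 : ((S.image ψ).card : ℝ) ≤ (Hn.card : ℝ) + 1 := by exact_mod_cast hup3
    rw [hAr] at hh
    calc (S.card : ℝ) ≤ (a:ℝ) * ((S.image ψ).card : ℝ) := hh
      _ ≤ (a:ℝ) * ((Hn.card : ℝ) + 1) := by
          exact mul_le_mul_of_nonneg_left hh2 (le_of_lt ha0)
  have h3 : (Hn.card : ℝ) = (n:ℝ) - (Xn.card : ℝ) := by
    have h9 : (Xn.card : ℝ) + (Hn.card : ℝ) = (n:ℝ) := by exact_mod_cast hpart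
    linarith
  have h4 : C < δ * n := by
    have hle : C/δ ≤ (Nat.ceil (C/δ) : ℝ) := Nat.le_ceil _
    have hn' : ((Nat.ceil (C/δ) : ℝ) + 1) ≤ (n:ℝ) := by exact_mod_cast hn2
    have h10 : C/δ < (n:ℝ) := by linarith
    calc C = (C/δ) * δ := by field_simp
      _ < (n:ℝ) * δ := mul_lt_mul_of_pos_right h10 hδpos
      _ = δ * n := by ring
  have key : ((a:ℝ)+1) * (Xn.card:ℝ) ≤ (a:ℝ) * n + C := by
    rw [h3] at h2
    rw [hC]
    nlinarith [h1, h2]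
  have key2 : ((a:ℝ)+1) * (c' * n) < ((a:ℝ)+1) * (Xn.card:ℝ) :=
    mul_lt_mul_of_pos_left hXcn (by linarith)
  have hexpand : δ * n = ((a:ℝ)+1) * (c' * n) - (a:ℝ) * n := by rw [hδ]; ring
  linarith

theorem gaps_bounded_of_large_density (X : Set ℕ) (a b : ℤ) (hb : 1 ≤ b) (hba : b ≤ a)
    (hd : (a : ℝ) / (a + 1) < upperDensity X) :
    (∀ n ∈ {z : ℤ | ∃ x ∈ X, ∃ y ∈ X, z = a * x - b * y},
      ∃ n' ∈ {z : ℤ | ∃ x ∈ X, ∃ y ∈ X, z = a * x - b * y}, 1 ≤ n' - n ∧ n' - n ≤ a) ∧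
    (∀ n ∈ {z : ℤ | ∃ x ∈ X, ∃ y ∈ X, z = b * x - a * y},
      ∃ n' ∈ {z : ℤ | ∃ x ∈ X, ∃ y ∈ X, z = b * x - a * y}, 1 ≤ n' - n ∧ n' - n ≤ a) := by
  have ha : 1 ≤ a := le_trans hb hba
  have ha0 : a ≠ 0 := by omega
  refine ⟨?_, ?_⟩
  · -- part 1 : aX - bX, use ψ j = (b*j)/a + 1
    set ψ : ℕ → ℕ := fun j => ((b * j) / a + 1).toNat with hψ
    have hq : ∀ j : ℕ, 0 ≤ (b * (j:ℤ)) / a :=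
      fun j => Int.ediv_nonneg (mul_nonneg (by omega) (by positivity)) (by omega)
    have hcast : ∀ j : ℕ, (ψ j : ℤ) = (b * j) / a + 1 := by
      intro j
      rw [hψ]
      exact Int.toNat_of_nonneg (by have := hq j; omega)
    have hspec : ∀ j : ℕ, 1 ≤ a * (ψ j) - b * j ∧ a * (ψ j) - b * j ≤ a := by
      intro j
      have hdm := Int.mul_ediv_add_emod (b * (j:ℤ)) a
      have hr0 := Int.emod_nonneg (b * (j:ℤ)) ha0
      have hr1 := Int.emod_lt_of_pos (b * (j:ℤ)) (by omega : (0:ℤ) < a)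
      have hexp : a * ((ψ j : ℤ)) = a * ((b * (j:ℤ)) / a) + a := by
        rw [hcast j]; ring
      constructor <;> linarith
    have hgrow : ∀ j : ℕ, 1 ≤ j → (ψ j : ℤ) ≤ j + 1 := by
      intro j _
      rw [hcast j]
      have h1 : (b * (j:ℤ)) / a ≤ (a * (j:ℤ)) / a :=
        Int.ediv_le_ediv (by omega) (mul_le_mul_of_nonneg_right hba (by positivity))
      have h2 : (a * (j:ℤ)) / a = j := Int.mul_ediv_cancel_left _ ha0
      omega
    have hfib : ∀ j j' : ℕ, 1 ≤ j → 1 ≤ j' → ψ j = ψ j' → (j : ℤ) + a ≤ j' → False := by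
      intro j j' _ _ heq hlt
      have heqZ : ((ψ j : ℕ) : ℤ) = ((ψ j' : ℕ) : ℤ) := by exact_mod_cast heq
      rw [hcast j, hcast j'] at heqZ
      have heq' : (b * (j:ℤ)) / a = (b * (j':ℤ)) / a := by omega
      have hdm := Int.mul_ediv_add_emod (b * (j:ℤ)) a
      have hdm' := Int.mul_ediv_add_emod (b * (j':ℤ)) a
      have hr0 := Int.emod_nonneg (b * (j:ℤ)) ha0
      have hr1' := Int.emod_lt_of_pos (b * (j':ℤ)) (by omega : (0:ℤ) < a)
      have hmono : (j':ℤ) - j ≤ b * (j':ℤ) - b * j := by nlinarith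
      rw [heq'] at hdm
      linarith
    intro n hn
    obtain ⟨x, hx, y, hy, rfl⟩ := hn
    obtain ⟨j, hj1, hyj, hxj⟩ := core X a ha hd ψ hgrow hfib x y
    refine ⟨a * ((x + ψ j : ℕ) : ℤ) - b * ((y + j : ℕ) : ℤ),
      ⟨x + ψ j, hxj, y + j, hyj, rfl⟩, ?_, ?_⟩
    · have h := (hspec j).1
      push_cast
      linarith
    · have h := (hspec j).2
      push_cast
      linarith
  · -- part 2 : bX - aX, use φ j = (b*j - 1)/a
    set φ : ℕ → ℕ := fun j => ((b * j - 1) / a).toNat with hφ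
    have hq : ∀ j : ℕ, 1 ≤ j → 0 ≤ (b * (j:ℤ) - 1) / a := by
      intro j hj
      apply Int.ediv_nonneg _ (by omega)
      have hj' : (1:ℤ) ≤ (j:ℤ) := by exact_mod_cast hj
      nlinarith
    have hcast : ∀ j : ℕ, 1 ≤ j → (φ j : ℤ) = (b * j - 1) / a := by
      intro j hj
      rw [hφ]
      exact Int.toNat_of_nonneg (hq j hj)
    have hspec : ∀ j : ℕ, 1 ≤ j → 1 ≤ b * j - a * (φ j) ∧ b * j - a * (φ j) ≤ a := by
      intro j hj
      have hdm := Int.mul_ediv_add_emod (b * (j:ℤ) - 1) a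
      have hr0 := Int.emod_nonneg (b * (j:ℤ) - 1) ha0
      have hr1 := Int.emod_lt_of_pos (b * (j:ℤ) - 1) (by omega : (0:ℤ) < a)
      have hexp : a * ((φ j : ℤ)) = a * ((b * (j:ℤ) - 1) / a) := by
        rw [hcast j hj]
      constructor <;> linarith
    have hgrow : ∀ j : ℕ, 1 ≤ j → (φ j : ℤ) ≤ j + 1 := by
      intro j hj
      rw [hcast j hj]
      have h1 : (b * (j:ℤ) - 1) / a ≤ (a * (j:ℤ)) / a := by
        apply Int.ediv_le_ediv (by omega)
        have h3 : b * (j:ℤ) ≤ a * j := mul_le_mul_of_nonneg_right hba (by positivity)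
        omega
      have h2 : (a * (j:ℤ)) / a = j := Int.mul_ediv_cancel_left _ ha0
      omega
    have hfib : ∀ j j' : ℕ, 1 ≤ j → 1 ≤ j' → φ j = φ j' → (j : ℤ) + a ≤ j' → False := by
      intro j j' hj hj' heq hlt
      have heqZ : ((φ j : ℕ) : ℤ) = ((φ j' : ℕ) : ℤ) := by exact_mod_cast heq
      rw [hcast j hj, hcast j' hj'] at heqZ
      have heq' : (b * (j:ℤ) - 1) / a = (b * (j':ℤ) - 1) / a := by omega
      have hdm := Int.mul_ediv_add_emod (b * (j:ℤ) - 1) a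
      have hdm' := Int.mul_ediv_add_emod (b * (j':ℤ) - 1) a
      have hr0 := Int.emod_nonneg (b * (j:ℤ) - 1) ha0
      have hr1' := Int.emod_lt_of_pos (b * (j':ℤ) - 1) (by omega : (0:ℤ) < a)
      have hmono : (j':ℤ) - j ≤ b * (j':ℤ) - b * j := by nlinarith
      rw [heq'] at hdm
      linarith
    intro n hn
    obtain ⟨x, hx, y, hy, rfl⟩ := hn
    obtain ⟨j, hj1, hxj, hyj⟩ := core X a ha hd φ hgrow hfib y x
    refine ⟨b * ((x + j : ℕ) : ℤ) - a * ((y + φ j : ℕ) : ℤ),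
      ⟨x + j, hxj, y + φ j, hyj, rfl⟩, ?_, ?_⟩
    · have h := (hspec j hj1).1
      push_cast
      linarith
    · have h := (hspec j hj1).2
      push_cast
      linarith
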